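/- arXiv:1303.3101 — 3 statements merged into one kernel-verified Lean document; each statement's English description precedes it below -/
import Mathlib

section
/- For all integers 2 ≤ s ≤ t and every ε > 0, there exists N such that for every n ≥ N and every digraph D on n vertices, the number of (s+t)-element vertex subsets of D inducing a copy of the complete bipartite digraph K⃗_{s,t} is at most ( C(s+t,s)·(s/(s+t))^s·(t/(s+t))^t + ε )·C(n, s+t). -/
open Real Finset

/-- Weighted AM-GM consequence: maximum of `x^a * y^b` on the simplex. -/
theorem kst_gm_aux {a b x y : ℝ} (ha : 0 < a) (hb : 0 < b) (hx : 0 ≤ x) (hy : 0 ≤ y)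
    (hxy : x + y ≤ 1) :
    x ^ a * y ^ b ≤ (a / (a + b)) ^ a * (b / (a + b)) ^ b := by
  have hab : 0 < a + b := by linarith
  set L : ℝ := a / (a + b) with hL
  set M : ℝ := b / (a + b) with hM
  have hL0 : 0 < L := div_pos ha hab
  have hM0 : 0 < M := div_pos hb hab
  have hLM : L + M = 1 := by rw [hL, hM]; field_simp
  have key : (x / L) ^ L * (y / M) ^ M ≤ 1 := by
    calc (x / L) ^ L * (y / M) ^ M
        ≤ L * (x / L) + M * (y / M) :=
          Real.geom_mean_le_arith_mean2_weighted hL0.le hM0.le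
            (div_nonneg hx hL0.le) (div_nonneg hy hM0.le) hLM
      _ = x + y := by field_simp
      _ ≤ 1 := hxy
  have hxL : 0 ≤ x / L := div_nonneg hx hL0.le
  have hyM : 0 ≤ y / M := div_nonneg hy hM0.le
  have e1 : (x / L) ^ a = ((x / L) ^ L) ^ (a + b) := by
    rw [← Real.rpow_mul hxL]
    congr 1
    rw [hL]; field_simp
  have e2 : (y / M) ^ b = ((y / M) ^ M) ^ (a + b) := by
    rw [← Real.rpow_mul hyM]
    congr 1
    rw [hM]; field_simp
  have main : (x / L) ^ a * (y / M) ^ b ≤ 1 := by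
    rw [e1, e2, ← Real.mul_rpow (Real.rpow_nonneg hxL _) (Real.rpow_nonneg hyM _)]
    exact Real.rpow_le_one (by positivity) key hab.le
  have hxa : x ^ a = (x / L) ^ a * L ^ a := by
    rw [Real.div_rpow hx hL0.le]
    field_simp
  have hyb : y ^ b = (y / M) ^ b * M ^ b := by
    rw [Real.div_rpow hy hM0.le]
    field_simp
  calc x ^ a * y ^ b = ((x / L) ^ a * (y / M) ^ b) * (L ^ a * M ^ b) := by
        rw [hxa, hyb]; ring
    _ ≤ 1 * (L ^ a * M ^ b) := by
        apply mul_le_mul_of_nonneg_right main (by positivity)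
    _ = L ^ a * M ^ b := by ring

theorem kst_pointwise {c a2 b2 ustar vstar x y z : ℝ}
    (hc : 0 < c) (ha2 : 1 ≤ a2) (hb2 : 0 < b2)
    (hus : 0 < ustar) (hvs : 0 < vstar)
    (hu : ∀ X W : ℝ, 0 ≤ X → 0 ≤ W → X + W ≤ 1 → X ^ c * W ≤ ustar)
    (hv : ∀ X W : ℝ, 0 ≤ X → 0 ≤ W → X + W ≤ 1 → X ^ b2 * W ^ a2 ≤ vstar)
    (hx : 0 ≤ x) (hy : 0 ≤ y) (hz : 0 ≤ z) (hsum : x + y + z ≤ 1) :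
    y * x ^ c / ustar + z ^ a2 * x ^ b2 / vstar ≤ 1 := by
  set w : ℝ := y + z with hw
  have hw0 : 0 ≤ w := by positivity
  have hxw : x + w ≤ 1 := by rw [hw]; linarith
  rcases eq_or_lt_of_le hw0 with hw0' | hwpos
  · -- w = 0, so y = z = 0
    have hy0 : y = 0 := by linarith [hz, hy]
    have hz0 : z = 0 := by linarith [hz, hy]
    rw [hy0, hz0]
    rw [Real.zero_rpow (by linarith : a2 ≠ 0)]
    simp
  · have hzw : z ≤ w := by rw [hw]; linarith
    have hyw : y ≤ w := by rw [hw]; linarith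
    have ha2' : 0 ≤ a2 - 1 := by linarith
    have hza2 : z ^ a2 ≤ z * w ^ (a2 - 1) := by
      have : z ^ a2 = z ^ (1 + (a2 - 1)) := by norm_num
      rw [this, Real.rpow_add' hz (by linarith : (1 : ℝ) + (a2 - 1) ≠ 0), Real.rpow_one]
      exact mul_le_mul_of_nonneg_left (Real.rpow_le_rpow hz hzw ha2') hz
    set P : ℝ := x ^ c / ustar with hP
    set Q : ℝ := w ^ (a2 - 1) * x ^ b2 / vstar with hQ
    have hP0 : 0 ≤ P := by positivity
    have hQ0 : 0 ≤ Q := by positivity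
    have hwP : w * P ≤ 1 := by
      rw [hP, mul_div_assoc']
      rw [div_le_one hus]
      calc w * x ^ c = x ^ c * w := mul_comm _ _
        _ ≤ ustar := hu x w hx hw0 hxw
    have hwQ : w * Q ≤ 1 := by
      rw [hQ, mul_div_assoc']
      rw [div_le_one hvs]
      have expand : w ^ a2 = w * w ^ (a2 - 1) := by
        rw [show a2 = 1 + (a2 - 1) by ring, Real.rpow_add' hw0
          (by linarith : (1 : ℝ) + (a2 - 1) ≠ 0), Real.rpow_one]
        ring_nf
      have : w * (w ^ (a2 - 1) * x ^ b2) = x ^ b2 * w ^ a2 := by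
        rw [expand]; ring
      rw [this]
      exact hv x w hx hw0 hxw
    have step : y * x ^ c / ustar + z ^ a2 * x ^ b2 / vstar ≤ y * P + z * Q := by
      apply add_le_add
      · rw [hP]; rw [mul_div_assoc]
      · rw [hQ]
        calc z ^ a2 * x ^ b2 / vstar ≤ (z * w ^ (a2 - 1)) * x ^ b2 / vstar := by
              gcongr
          _ = z * (w ^ (a2 - 1) * x ^ b2 / vstar) := by ring
    refine step.trans ?_
    rcases le_total P Q with hPQ | hPQ
    · calc y * P + z * Q ≤ y * Q + z * Q := by
            apply add_le_add_left (mul_le_mul_of_nonneg_left hPQ hy)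
        _ = w * Q := by rw [hw]; ring
        _ ≤ 1 := hwQ
    · calc y * P + z * Q ≤ y * P + z * P := by
            apply add_le_add_right (mul_le_mul_of_nonneg_left hPQ hz)
        _ = w * P := by rw [hw]; ring
        _ ≤ 1 := hwP

set_option maxHeartbeats 1000000 in
theorem kst_analytic (s t : ℕ) (hs : 2 ≤ s) (hst : s ≤ t) (n : ℕ) (hn : 0 < n)
    {V : Type} (F : Finset V) (hF : F.card = n)
    (xR yR zR : V → ℝ)
    (hx : ∀ v, 0 ≤ xR v) (hy : ∀ v, 0 ≤ yR v) (hz : ∀ v, 0 ≤ zR v)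
    (hbud : ∀ v ∈ F, xR v + yR v + zR v ≤ (n : ℝ))
    (ca a2' b2' : ℝ)
    (hcae : ca = (s : ℝ) / t)
    (ha2e : a2' = 1 + (((s : ℝ) - 1) - (s : ℝ) ^ 2 / (((s : ℝ) + t) * t)) * (((s : ℝ) + t) / t))
    (hb2e : b2' = ((t : ℝ) - 1) * (((s : ℝ) + t) / t)) :
    (∑ v ∈ F, yR v * xR v ^ ca) ^ ((s : ℝ) / (s + t)) *
      (∑ v ∈ F, zR v ^ a2' * xR v ^ b2') ^ ((t : ℝ) / (s + t)) ≤
      ((s : ℝ) / (s + t)) ^ s * ((t : ℝ) / (s + t)) ^ t * (n : ℝ) ^ (s + t) := by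
  subst hcae ha2e hb2e
  have hsR : (2 : ℝ) ≤ (s : ℝ) := by exact_mod_cast hs
  have hstR : (s : ℝ) ≤ (t : ℝ) := by exact_mod_cast hst
  have htR : (2 : ℝ) ≤ (t : ℝ) := le_trans hsR hstR
  have hs0 : (0 : ℝ) < s := by linarith
  have ht0 : (0 : ℝ) < t := by linarith
  have hk0 : (0 : ℝ) < (s : ℝ) + t := by linarith
  set c : ℝ := (s : ℝ) / t with hcdef
  set e1 : ℝ := (s : ℝ) ^ 2 / (((s : ℝ) + t) * t) with he1def
  set e2 : ℝ := ((s : ℝ) - 1) - e1 with he2def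
  set a2 : ℝ := 1 + e2 * (((s : ℝ) + t) / t) with ha2def
  set b2 : ℝ := ((t : ℝ) - 1) * (((s : ℝ) + t) / t) with hb2def
  set al : ℝ := (s : ℝ) / ((s : ℝ) + t) with haldef
  set be : ℝ := (t : ℝ) / ((s : ℝ) + t) with hbedef
  have hal0 : 0 < al := div_pos hs0 hk0
  have hbe0 : 0 < be := div_pos ht0 hk0
  have halbe : al + be = 1 := by rw [haldef, hbedef]; field_simp
  have hc0 : 0 < c := div_pos hs0 ht0
  have he10 : 0 ≤ e1 := by positivity
  have he20 : 0 ≤ e2 := by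
    rw [he2def, he1def, sub_nonneg, div_le_iff₀ (by positivity)]
    nlinarith [mul_le_mul (by linarith : 2*(s:ℝ) ≤ (s:ℝ)+t) hstR (by linarith : (0:ℝ) ≤ (s:ℝ))
      (by linarith : (0:ℝ) ≤ (s:ℝ)+t)]
  have ha21 : 1 ≤ a2 := by
    rw [ha2def]
    nlinarith [mul_nonneg he20 (le_of_lt (div_pos hk0 ht0))]
  have hb20 : 0 < b2 := by
    rw [hb2def]
    have : (0:ℝ) < (t:ℝ) - 1 := by linarith
    positivity
  set ustar : ℝ := al ^ c * be with husdef
  set vstar : ℝ := al ^ a2 * be ^ b2 with hvsdef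
  have hus0 : 0 < ustar := by
    rw [husdef]; exact mul_pos (Real.rpow_pos_of_pos hal0 _) hbe0
  have hvs0 : 0 < vstar := by
    rw [hvsdef]; exact mul_pos (Real.rpow_pos_of_pos hal0 _) (Real.rpow_pos_of_pos hbe0 _)
  -- ratio identities
  have hrc1 : c / (c + 1) = al := by
    rw [hcdef, haldef]; field_simp; try ring
  have hrc2 : 1 / (c + 1) = be := by
    have hcp : c + 1 = ((s:ℝ) + t)/t := by rw [hcdef]; field_simp
    rw [hcp, one_div_div, hbedef]
  have hident : a2 * ((s:ℝ) + t) = (s:ℝ) * (a2 + b2) := by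
    rw [ha2def, hb2def, he2def, he1def]; field_simp; ring
  have ha2b2 : 0 < a2 + b2 := by linarith
  have hra : a2 / (a2 + b2) = al := by
    rw [haldef, div_eq_div_iff ha2b2.ne' hk0.ne']
    linarith [hident]
  have hrb : b2 / (a2 + b2) = be := by
    have h1 : a2 / (a2+b2) + b2/(a2+b2) = 1 := by field_simp
    rw [hra] at h1
    rw [hbedef]
    rw [haldef] at h1
    field_simp at h1 ⊢
    linarith
  -- max bounds
  have hu : ∀ X W : ℝ, 0 ≤ X → 0 ≤ W → X + W ≤ 1 → X ^ c * W ≤ ustar := by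
    intro X W hX hW hXW
    have := kst_gm_aux hc0 one_pos hX hW hXW
    rw [Real.rpow_one, Real.rpow_one, hrc1, hrc2] at this
    rw [husdef]
    exact this
  have hv : ∀ X W : ℝ, 0 ≤ X → 0 ≤ W → X + W ≤ 1 → X ^ b2 * W ^ a2 ≤ vstar := by
    intro X W hX hW hXW
    have := kst_gm_aux hb20 (lt_of_lt_of_le one_pos ha21) hX hW hXW
    rw [show b2 + a2 = a2 + b2 by ring, hra, hrb] at this
    rw [hvsdef]
    calc X ^ b2 * W ^ a2 ≤ be ^ b2 * al ^ a2 := this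
      _ = al ^ a2 * be ^ b2 := mul_comm _ _
  -- normalized sums
  have hnR : (0:ℝ) < n := by exact_mod_cast hn
  set W1 : ℝ := ∑ v ∈ F, (yR v / n) * (xR v / n) ^ c with hW1def
  set W2 : ℝ := ∑ v ∈ F, (zR v / n) ^ a2 * (xR v / n) ^ b2 with hW2def
  have hW10 : 0 ≤ W1 := by
    rw [hW1def]
    apply Finset.sum_nonneg
    intro v _
    have := hy v; have := hx v
    positivity
  have hW20 : 0 ≤ W2 := by
    rw [hW2def]
    apply Finset.sum_nonneg
    intro v _
    have := hz v; have := hx v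
    positivity
  have hWsum : W1 / ustar + W2 / vstar ≤ n := by
    rw [hW1def, hW2def, Finset.sum_div, Finset.sum_div, ← Finset.sum_add_distrib]
    calc ∑ v ∈ F, ((yR v / n) * (xR v / n) ^ c / ustar + (zR v / n) ^ a2 * (xR v / n) ^ b2 / vstar)
        ≤ ∑ _v ∈ F, (1:ℝ) := by
          apply Finset.sum_le_sum
          intro v hvF
          apply kst_pointwise hc0 ha21 hb20 hus0 hvs0 hu hv
            (div_nonneg (hx v) hnR.le) (div_nonneg (hy v) hnR.le) (div_nonneg (hz v) hnR.le)
          have := hbud v hvF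
          rw [← add_div, ← add_div, div_le_one hnR]
          linarith
      _ = n := by rw [Finset.sum_const, hF]; simp
  -- unnormalize
  set S1 : ℝ := ∑ v ∈ F, yR v * xR v ^ c with hS1def
  set S2 : ℝ := ∑ v ∈ F, zR v ^ a2 * xR v ^ b2 with hS2def
  have hnne : (n:ℝ) ≠ 0 := hnR.ne'
  have hS1W : S1 = W1 * (n:ℝ) ^ ((1:ℝ) + c) := by
    rw [hS1def, hW1def, Finset.sum_mul]
    apply Finset.sum_congr rfl
    intro v _
    rw [Real.div_rpow (hx v) hnR.le, Real.rpow_add hnR 1 c, Real.rpow_one]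
    have hnc : (0:ℝ) < (n:ℝ) ^ c := Real.rpow_pos_of_pos hnR c
    field_simp
    try ring
  have hS2W : S2 = W2 * (n:ℝ) ^ (a2 + b2) := by
    rw [hS2def, hW2def, Finset.sum_mul]
    apply Finset.sum_congr rfl
    intro v _
    rw [Real.div_rpow (hz v) hnR.le, Real.div_rpow (hx v) hnR.le, Real.rpow_add hnR a2 b2]
    have h1 : (0:ℝ) < (n:ℝ) ^ a2 := Real.rpow_pos_of_pos hnR a2
    have h2 : (0:ℝ) < (n:ℝ) ^ b2 := Real.rpow_pos_of_pos hnR b2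
    field_simp
    try ring
  set A : ℝ := W1 / ustar / n with hAdef
  set B : ℝ := W2 / vstar / n with hBdef
  have hA0 : 0 ≤ A := by rw [hAdef]; positivity
  have hB0 : 0 ≤ B := by rw [hBdef]; positivity
  have hAB : A + B ≤ 1 := by
    rw [hAdef, hBdef, ← add_div, div_le_one hnR]
    exact hWsum
  have hgm : A ^ al * B ^ be ≤ al ^ al * be ^ be := by
    have := kst_gm_aux hal0 hbe0 hA0 hB0 hAB
    rwa [halbe, div_one, div_one] at this
  have hW1A : W1 = A * (ustar * n) := by
    rw [hAdef]; field_simp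
  have hW2B : W2 = B * (vstar * n) := by
    rw [hBdef]; field_simp
  have key2 : W1 ^ al * W2 ^ be ≤ (al ^ al * be ^ be) * ((ustar ^ al * vstar ^ be) * n) := by
    calc W1 ^ al * W2 ^ be
        = (A ^ al * B ^ be) * ((ustar ^ al * vstar ^ be) * ((n:ℝ) ^ al * (n:ℝ) ^ be)) := by
          rw [hW1A, hW2B, Real.mul_rpow hA0 (by positivity), Real.mul_rpow hB0 (by positivity),
            Real.mul_rpow hus0.le hnR.le, Real.mul_rpow hvs0.le hnR.le]
          ring
      _ = (A ^ al * B ^ be) * ((ustar ^ al * vstar ^ be) * n) := by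
          rw [← Real.rpow_add hnR, halbe, Real.rpow_one]
      _ ≤ (al ^ al * be ^ be) * ((ustar ^ al * vstar ^ be) * n) := by
          apply mul_le_mul_of_nonneg_right hgm (by positivity)
  -- constants
  have hxs : al + (c * al + a2 * be) = (s:ℝ) := by
    rw [haldef, hbedef, hcdef, ha2def, he2def, he1def]
    field_simp
    try ring
  have hxt : be + (al + b2 * be) = (t:ℝ) := by
    rw [haldef, hbedef, hb2def]
    field_simp
    try ring
  have hconst : (al ^ al * be ^ be) * (ustar ^ al * vstar ^ be) = al ^ s * be ^ t := by
    rw [husdef, hvsdef, Real.mul_rpow (Real.rpow_nonneg hal0.le c) hbe0.le,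
      Real.mul_rpow (Real.rpow_nonneg hal0.le a2) (Real.rpow_nonneg hbe0.le b2),
      ← Real.rpow_mul hal0.le c al, ← Real.rpow_mul hal0.le a2 be,
      ← Real.rpow_mul hbe0.le b2 be]
    calc al ^ al * be ^ be * (al ^ (c * al) * be ^ al * (al ^ (a2 * be) * be ^ (b2 * be)))
        = (al ^ al * (al ^ (c * al) * al ^ (a2 * be))) * (be ^ be * (be ^ al * be ^ (b2 * be))) := by
          ring
      _ = al ^ (al + (c * al + a2 * be)) * be ^ (be + (al + b2 * be)) := by
          rw [← Real.rpow_add hal0, ← Real.rpow_add hal0, ← Real.rpow_add hbe0,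
            ← Real.rpow_add hbe0]
      _ = al ^ ((s:ℝ)) * be ^ ((t:ℝ)) := by rw [hxs, hxt]
      _ = al ^ s * be ^ t := by rw [Real.rpow_natCast, Real.rpow_natCast]
  have hxn : ((1:ℝ) + c) * al + (a2 + b2) * be + 1 = ((s + t : ℕ) : ℝ) := by
    push_cast
    rw [haldef, hbedef, hcdef, ha2def, hb2def, he2def, he1def]
    field_simp
    try ring
  calc S1 ^ al * S2 ^ be
      = (W1 ^ al * W2 ^ be) * ((n:ℝ) ^ (((1:ℝ) + c) * al) * (n:ℝ) ^ ((a2 + b2) * be)) := by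
        rw [hS1W, hS2W, Real.mul_rpow hW10 (by positivity), Real.mul_rpow hW20 (by positivity),
          ← Real.rpow_mul hnR.le, ← Real.rpow_mul hnR.le]
        ring
    _ ≤ ((al ^ al * be ^ be) * ((ustar ^ al * vstar ^ be) * n)) *
          ((n:ℝ) ^ (((1:ℝ) + c) * al) * (n:ℝ) ^ ((a2 + b2) * be)) := by
        apply mul_le_mul_of_nonneg_right key2 (by positivity)
    _ = ((al ^ al * be ^ be) * (ustar ^ al * vstar ^ be)) *
          ((n:ℝ) ^ (((1:ℝ) + c) * al) * (n:ℝ) ^ ((a2 + b2) * be) * (n:ℝ) ^ ((1:ℝ))) := by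
        rw [Real.rpow_one]; ring
    _ = (al ^ s * be ^ t) * (n:ℝ) ^ ((((1:ℝ) + c) * al + (a2 + b2) * be + 1)) := by
        rw [hconst, ← Real.rpow_add hnR, ← Real.rpow_add hnR]
    _ = (al ^ s * be ^ t) * (n:ℝ) ^ ((s + t : ℕ)) := by
        rw [hxn, Real.rpow_natCast]
    _ = al ^ s * be ^ t * (n:ℝ) ^ (s + t) := by ring


/-- The number of `(s+t)`-element vertex subsets of the digraph `D` inducing a
copy of the complete bipartite digraph `K⃗_{s,t}`: there is an `s`-element
subset `A ⊆ S` such that `D` has an arc `u → w` (for `u, w ∈ S`) iff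
`u ∈ A` and `w ∉ A`. -/
noncomputable def kstCount (s t : ℕ) {V : Type} [Fintype V] (D : V → V → Prop) : ℕ :=
  {S : Finset V | S.card = s + t ∧
    ∃ A ⊆ S, A.card = s ∧ ∀ u ∈ S, ∀ w ∈ S, (D u w ↔ (u ∈ A ∧ w ∉ A))}.ncard

set_option maxHeartbeats 1000000 in
theorem kst_core_nat (s t : ℕ) (hs : 2 ≤ s) (hst : s ≤ t) (n : ℕ)
    (D : Fin n → Fin n → Prop) :
    ∃ (xN yN zN : Fin n → ℕ) (XC YC : Fin n × Fin n → ℕ)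
      (E : Finset (Fin n × Fin n)),
      (∀ v, xN v + yN v + zN v ≤ n) ∧
      (∀ e ∈ E, XC e ≤ xN e.1 ∧ XC e ≤ zN e.2 ∧ YC e ≤ xN e.2) ∧
      (∀ H : Fin n → ℝ, ∑ e ∈ E, H e.1 = ∑ u : Fin n, (yN u : ℝ) * H u) ∧
      (∀ H : Fin n → ℝ, ∑ e ∈ E, H e.2 = ∑ w : Fin n, (zN w : ℝ) * H w) ∧
      s.factorial * t.factorial * kstCount s t D ≤
        ∑ e ∈ E, XC e ^ (s - 1) * YC e ^ (t - 1) := by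
  classical
  set P : Finset (Fin n) → Prop := fun S => S.card = s + t ∧
    ∃ A ⊆ S, A.card = s ∧ ∀ u ∈ S, ∀ w ∈ S, (D u w ↔ (u ∈ A ∧ w ∉ A)) with hP
  set goodS : Finset (Finset (Fin n)) := Finset.univ.filter P with hgoodS
  -- identify kstCount with goodS.card
  have hcount : kstCount s t D = goodS.card := by
    have hset : {S : Finset (Fin n) | S.card = s + t ∧
        ∃ A ⊆ S, A.card = s ∧ ∀ u ∈ S, ∀ w ∈ S, (D u w ↔ (u ∈ A ∧ w ∉ A))} = ↑goodS := by
      ext S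
      simp only [hgoodS, Finset.coe_filter, Finset.mem_univ, true_and, Set.mem_setOf_eq, hP]
    rw [kstCount, hset, Set.ncard_coe_finset]
  -- choose witnesses
  have hch : ∀ S : Finset (Fin n), S ∈ goodS →
      ∃ A, A ⊆ S ∧ A.card = s ∧ ∀ u ∈ S, ∀ w ∈ S, (D u w ↔ (u ∈ A ∧ w ∉ A)) := by
    intro S hS
    have := (Finset.mem_filter.mp hS).2
    obtain ⟨A, hA1, hA2, hA3⟩ := this.2
    exact ⟨A, hA1, hA2, hA3⟩
  choose wit hsub hcard hiff using hch
  set cops : Finset (Finset (Fin n) × Finset (Fin n)) :=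
    goodS.attach.image (fun x => (wit x.1 x.2, x.1 \ wit x.1 x.2)) with hcops
  have hcops_card : cops.card = goodS.card := by
    rw [hcops, Finset.card_image_of_injOn, Finset.card_attach]
    intro x _ y _ hxy
    have hx : x.1 = wit x.1 x.2 ∪ (x.1 \ wit x.1 x.2) :=
      (Finset.union_sdiff_of_subset (hsub x.1 x.2)).symm
    have hy : y.1 = wit y.1 y.2 ∪ (y.1 \ wit y.1 y.2) :=
      (Finset.union_sdiff_of_subset (hsub y.1 y.2)).symm
    have h1 : wit x.1 x.2 = wit y.1 y.2 := congrArg Prod.fst hxy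
    have h2 : x.1 \ wit x.1 x.2 = y.1 \ wit y.1 y.2 := congrArg Prod.snd hxy
    exact Subtype.ext (by rw [hx, hy, h2, h1])
  -- structural properties of copies
  have hQ : ∀ c ∈ cops, c.1.card = s ∧ c.2.card = t ∧
      (∀ u ∈ c.1, ∀ z ∈ c.1, ¬ D u z) ∧ (∀ w ∈ c.2, ∀ z ∈ c.2, ¬ D w z) ∧
      (∀ u ∈ c.1, ∀ w ∈ c.2, D u w ∧ ¬ D w u) := by
    intro c hc
    rw [hcops, Finset.mem_image] at hc
    obtain ⟨x, hx, rfl⟩ := hc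
    obtain ⟨S, hSgood⟩ := x
    have hPS : P S := (Finset.mem_filter.mp hSgood).2
    have h1 := hsub S hSgood
    have h2 := hcard S hSgood
    have h3 := hiff S hSgood
    refine ⟨h2, ?_, ?_, ?_, ?_⟩
    · simp only
      rw [Finset.card_sdiff_of_subset h1, hPS.1, h2]
      omega
    · intro u hu z hz hD
      exact ((h3 u (h1 hu) z (h1 hz)).mp hD).2 hz
    · intro w hw z hz hD
      exact (Finset.mem_sdiff.mp hw).2
        ((h3 w (Finset.mem_sdiff.mp hw).1 z (Finset.mem_sdiff.mp hz).1).mp hD).1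
    · intro u hu w hw
      refine ⟨(h3 u (h1 hu) w (Finset.mem_sdiff.mp hw).1).mpr
        ⟨hu, (Finset.mem_sdiff.mp hw).2⟩, fun hD => ?_⟩
      exact (Finset.mem_sdiff.mp hw).2
        ((h3 w (Finset.mem_sdiff.mp hw).1 u (h1 hu)).mp hD).1
  -- the arc set
  set E : Finset (Fin n × Fin n) :=
    (Finset.univ ×ˢ Finset.univ).filter (fun e => D e.1 e.2 ∧ ¬ D e.2 e.1) with hE
  set Ne : Fin n × Fin n → ℕ :=
    fun e => (cops.filter (fun c => e.1 ∈ c.1 ∧ e.2 ∈ c.2)).card with hNe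
  -- double counting
  have hdouble : s * t * cops.card = ∑ e ∈ E, Ne e := by
    have step1 : ∀ c ∈ cops, (E.filter (fun e => e.1 ∈ c.1 ∧ e.2 ∈ c.2)) = c.1 ×ˢ c.2 := by
      intro c hc
      obtain ⟨-, -, -, -, hcross⟩ := hQ c hc
      ext e
      simp only [Finset.mem_filter, Finset.mem_product, hE, Finset.mem_univ, true_and,
        and_true]
      constructor
      · tauto
      · rintro ⟨h1, h2⟩
        exact ⟨(hcross e.1 h1 e.2 h2), h1, h2⟩
    calc s * t * cops.card = ∑ _c ∈ cops, s * t := by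
          rw [Finset.sum_const, smul_eq_mul, mul_comm]
      _ = ∑ c ∈ cops, ∑ e ∈ E, (if e.1 ∈ c.1 ∧ e.2 ∈ c.2 then 1 else 0) := by
          apply Finset.sum_congr rfl
          intro c hc
          rw [← Finset.sum_filter, step1 c hc, Finset.sum_const, smul_eq_mul, mul_one,
            Finset.card_product, (hQ c hc).1, (hQ c hc).2.1]
      _ = ∑ e ∈ E, ∑ c ∈ cops, (if e.1 ∈ c.1 ∧ e.2 ∈ c.2 then 1 else 0) := Finset.sum_comm
      _ = ∑ e ∈ E, Ne e := by
          apply Finset.sum_congr rfl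
          intro e _
          exact (Finset.card_filter _ _).symm
  -- vertex statistics
  set xN : Fin n → ℕ :=
    fun v => (Finset.univ.filter (fun z => z ≠ v ∧ ¬ D v z ∧ ¬ D z v)).card with hxN
  set yN : Fin n → ℕ :=
    fun v => (Finset.univ.filter (fun z => D v z ∧ ¬ D z v)).card with hyN
  set zN : Fin n → ℕ :=
    fun v => (Finset.univ.filter (fun z => D z v ∧ ¬ D v z)).card with hzN
  set XC : Fin n × Fin n → ℕ := fun e =>
    (Finset.univ.filter
      (fun z => (z ≠ e.1 ∧ ¬ D e.1 z ∧ ¬ D z e.1) ∧ (D z e.2 ∧ ¬ D e.2 z))).card with hXC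
  set YC : Fin n × Fin n → ℕ := fun e =>
    (Finset.univ.filter
      (fun z => (D e.1 z ∧ ¬ D z e.1) ∧ (z ≠ e.2 ∧ ¬ D e.2 z ∧ ¬ D z e.2))).card with hYC
  -- the per-edge injection bound
  have hNe_bound : ∀ e ∈ E, Ne e ≤ (XC e).choose (s-1) * (YC e).choose (t-1) := by
    intro e heE
    have hmain := Finset.card_le_card_of_injOn
      (s := cops.filter (fun c => e.1 ∈ c.1 ∧ e.2 ∈ c.2))
      (t := ((Finset.univ.filter
          (fun z => (z ≠ e.1 ∧ ¬ D e.1 z ∧ ¬ D z e.1) ∧ (D z e.2 ∧ ¬ D e.2 z))).powersetCard (s-1)) ×ˢ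
        ((Finset.univ.filter
          (fun z => (D e.1 z ∧ ¬ D z e.1) ∧ (z ≠ e.2 ∧ ¬ D e.2 z ∧ ¬ D z e.2))).powersetCard (t-1)))
      (fun c => (c.1.erase e.1, c.2.erase e.2)) ?_ ?_
    · calc Ne e ≤ _ := hmain
        _ = (XC e).choose (s-1) * (YC e).choose (t-1) := by
          rw [Finset.card_product, Finset.card_powersetCard, Finset.card_powersetCard, hXC, hYC]
    · -- maps into the target
      intro c hcmem
      rw [Finset.mem_coe, Finset.mem_filter] at hcmem
      obtain ⟨hc, hu, hw⟩ := hcmem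
      obtain ⟨hcardA, hcardB, hAA, hBB, hABx⟩ := hQ c hc
      rw [Finset.mem_coe, Finset.mem_product]
      constructor
      · rw [Finset.mem_powersetCard]
        constructor
        · intro z hz
          obtain ⟨hzne, hzA⟩ := Finset.mem_erase.mp hz
          rw [Finset.mem_filter]
          exact ⟨Finset.mem_univ _,
            ⟨hzne, hAA e.1 hu z hzA, hAA z hzA e.1 hu⟩, hABx z hzA e.2 hw⟩
        · rw [Finset.card_erase_of_mem hu, hcardA]
      · rw [Finset.mem_powersetCard]
        constructor
        · intro z hz
          obtain ⟨hzne, hzB⟩ := Finset.mem_erase.mp hz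
          rw [Finset.mem_filter]
          exact ⟨Finset.mem_univ _, hABx e.1 hu z hzB,
            ⟨hzne, hBB e.2 hw z hzB, hBB z hzB e.2 hw⟩⟩
        · rw [Finset.card_erase_of_mem hw, hcardB]
    · -- injectivity
      intro c1 h1 c2 h2 heq
      simp only [Finset.coe_filter, Set.mem_setOf_eq] at h1 h2
      have hu1 : e.1 ∈ c1.1 := h1.2.1
      have hw1 : e.2 ∈ c1.2 := h1.2.2
      have hu2 : e.1 ∈ c2.1 := h2.2.1
      have hw2 : e.2 ∈ c2.2 := h2.2.2
      have g1 : c1.1.erase e.1 = c2.1.erase e.1 := congrArg Prod.fst heq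
      have g2 : c1.2.erase e.2 = c2.2.erase e.2 := congrArg Prod.snd heq
      have : c1.1 = c2.1 := by
        rw [← Finset.insert_erase hu1, ← Finset.insert_erase hu2, g1]
      have h22 : c1.2 = c2.2 := by
        rw [← Finset.insert_erase hw1, ← Finset.insert_erase hw2, g2]
      exact Prod.ext this h22
  -- the main ℕ bound
  have main : (s-1).factorial * (t-1).factorial * (s * t * cops.card) ≤
      ∑ e ∈ E, XC e ^ (s-1) * YC e ^ (t-1) := by
    rw [hdouble, Finset.mul_sum]
    apply Finset.sum_le_sum
    intro e heE
    calc (s-1).factorial * (t-1).factorial * Ne e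
        ≤ (s-1).factorial * (t-1).factorial * ((XC e).choose (s-1) * (YC e).choose (t-1)) :=
          Nat.mul_le_mul_left _ (hNe_bound e heE)
      _ = ((s-1).factorial * (XC e).choose (s-1)) * ((t-1).factorial * (YC e).choose (t-1)) := by
          ring
      _ = (XC e).descFactorial (s-1) * (YC e).descFactorial (t-1) := by
          rw [← Nat.descFactorial_eq_factorial_mul_choose,
            ← Nat.descFactorial_eq_factorial_mul_choose]
      _ ≤ XC e ^ (s-1) * YC e ^ (t-1) :=
          Nat.mul_le_mul (Nat.descFactorial_le_pow _ _) (Nat.descFactorial_le_pow _ _)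
  refine ⟨xN, yN, zN, XC, YC, E, ?_, ?_, ?_, ?_, ?_⟩
  · -- budget
    intro v
    set f1 := Finset.univ.filter (fun z => z ≠ v ∧ ¬ D v z ∧ ¬ D z v) with hf1
    set f2 := Finset.univ.filter (fun z : Fin n => D v z ∧ ¬ D z v) with hf2
    set f3 := Finset.univ.filter (fun z : Fin n => D z v ∧ ¬ D v z) with hf3
    have hdisj1 : Disjoint f1 f2 := by
      rw [Finset.disjoint_left]
      intro a ha hb
      rw [hf1, Finset.mem_filter] at ha
      rw [hf2, Finset.mem_filter] at hb
      tauto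
    have hdisj2 : Disjoint (f1 ∪ f2) f3 := by
      rw [Finset.disjoint_left]
      intro a ha hb
      rw [Finset.mem_union, hf1, hf2, Finset.mem_filter, Finset.mem_filter] at ha
      rw [hf3, Finset.mem_filter] at hb
      tauto
    have e2 : ((f1 ∪ f2) ∪ f3).card = xN v + yN v + zN v := by
      rw [Finset.card_union_of_disjoint hdisj2, Finset.card_union_of_disjoint hdisj1]
    rw [← e2]
    calc ((f1 ∪ f2) ∪ f3).card ≤ (Finset.univ : Finset (Fin n)).card := Finset.card_le_univ _
      _ = n := by simp
  · -- comparisons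
    intro e _
    refine ⟨?_, ?_, ?_⟩
    · apply Finset.card_le_card
      intro z hz
      rw [Finset.mem_filter] at hz ⊢
      tauto
    · apply Finset.card_le_card
      intro z hz
      rw [Finset.mem_filter] at hz ⊢
      tauto
    · apply Finset.card_le_card
      intro z hz
      rw [Finset.mem_filter] at hz ⊢
      tauto
  · -- first edge sum
    intro H
    rw [hE, Finset.sum_filter, Finset.sum_product]
    apply Finset.sum_congr rfl
    intro u _
    rw [← Finset.sum_filter]
    simp only [Finset.sum_const, nsmul_eq_mul]
    rfl
  · -- second edge sum
    intro H
    rw [hE, Finset.sum_filter, Finset.sum_product]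
    rw [Finset.sum_comm]
    apply Finset.sum_congr rfl
    intro w _
    rw [← Finset.sum_filter]
    simp only [Finset.sum_const, nsmul_eq_mul]
    rfl
  · -- main bound
    calc s.factorial * t.factorial * kstCount s t D
        = (s-1).factorial * (t-1).factorial * (s * t * cops.card) := by
          rw [hcount, ← hcops_card,
            ← Nat.mul_factorial_pred (by omega : s ≠ 0),
            ← Nat.mul_factorial_pred (by omega : t ≠ 0)]
          ring
      _ ≤ _ := main


set_option maxHeartbeats 1600000 in
theorem kst_core (s t : ℕ) (hs : 2 ≤ s) (hst : s ≤ t) (n : ℕ) (hn : 0 < n)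
    (D : Fin n → Fin n → Prop) :
    ((s.factorial * t.factorial : ℕ) : ℝ) * (kstCount s t D : ℝ) ≤
      ((s : ℝ) / (s + t)) ^ s * ((t : ℝ) / (s + t)) ^ t * (n : ℝ) ^ (s + t) := by
  obtain ⟨xN, yN, zN, XC, YC, E, hbud, hcmp, hfst, hsnd, hmain⟩ := kst_core_nat s t hs hst n D
  have hsR : (2 : ℝ) ≤ (s : ℝ) := by exact_mod_cast hs
  have hstR : (s : ℝ) ≤ (t : ℝ) := by exact_mod_cast hst
  have hs0 : (0 : ℝ) < s := by linarith
  have ht0 : (0 : ℝ) < t := by linarith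
  have hk0 : (0 : ℝ) < (s : ℝ) + t := by linarith
  set e1 : ℝ := (s : ℝ) ^ 2 / (((s : ℝ) + t) * t) with he1def
  set e2 : ℝ := ((s : ℝ) - 1) - e1 with he2def
  set q : ℝ := ((s : ℝ) + t) / t with hqdef
  set p : ℝ := ((s : ℝ) + t) / s with hpdef
  have he10 : 0 ≤ e1 := by rw [he1def]; positivity
  have he20 : 0 ≤ e2 := by
    rw [he2def, he1def, sub_nonneg, div_le_iff₀ (by positivity)]
    nlinarith [mul_le_mul (by linarith : 2 * (s : ℝ) ≤ (s : ℝ) + t) hstR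
      (by linarith : (0 : ℝ) ≤ (s : ℝ)) (by linarith : (0 : ℝ) ≤ (s : ℝ) + t)]
  have he12 : e1 + e2 = (s : ℝ) - 1 := by rw [he2def]; ring
  have hq0 : 0 < q := by rw [hqdef]; positivity
  have hpq : Real.HolderConjugate p q := by
    rw [Real.holderConjugate_iff]
    constructor
    · rw [hpdef, lt_div_iff₀ hs0]; linarith
    · rw [hpdef, hqdef, inv_div, inv_div, ← add_div, div_self hk0.ne']
  set F : Fin n → ℝ := fun u => (xN u : ℝ) ^ e1 with hFdef
  set G : Fin n → ℝ := fun w => (zN w : ℝ) ^ e2 * (xN w : ℝ) ^ ((t : ℝ) - 1) with hGdef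
  have hF0 : ∀ u, 0 ≤ F u := fun u => Real.rpow_nonneg (Nat.cast_nonneg _) _
  have hG0 : ∀ w, 0 ≤ G w := fun w =>
    mul_nonneg (Real.rpow_nonneg (Nat.cast_nonneg _) _) (Real.rpow_nonneg (Nat.cast_nonneg _) _)
  have step1 : ((s.factorial * t.factorial : ℕ) : ℝ) * (kstCount s t D : ℝ) ≤
      ∑ e ∈ E, (XC e : ℝ) ^ (s - 1) * (YC e : ℝ) ^ (t - 1) := by
    calc ((s.factorial * t.factorial : ℕ) : ℝ) * (kstCount s t D : ℝ)
        = ((s.factorial * t.factorial * kstCount s t D : ℕ) : ℝ) := by push_cast; ring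
      _ ≤ ((∑ e ∈ E, XC e ^ (s - 1) * YC e ^ (t - 1) : ℕ) : ℝ) := by exact_mod_cast hmain
      _ = _ := by push_cast; rfl
  have hcast1 : ((s - 1 : ℕ) : ℝ) = (s : ℝ) - 1 := by
    have h1 : 1 ≤ s := by omega
    push_cast [h1]; ring
  have hcast2 : ((t - 1 : ℕ) : ℝ) = (t : ℝ) - 1 := by
    have h1 : 1 ≤ t := by omega
    push_cast [h1]; ring
  have step2 : ∑ e ∈ E, (XC e : ℝ) ^ (s - 1) * (YC e : ℝ) ^ (t - 1) ≤
      ∑ e ∈ E, F e.1 * G e.2 := by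
    apply Finset.sum_le_sum
    intro e heE
    obtain ⟨h1, h2, h3⟩ := hcmp e heE
    have h1R : (XC e : ℝ) ≤ (xN e.1 : ℝ) := by exact_mod_cast h1
    have h2R : (XC e : ℝ) ≤ (zN e.2 : ℝ) := by exact_mod_cast h2
    have h3R : (YC e : ℝ) ≤ (xN e.2 : ℝ) := by exact_mod_cast h3
    have hXr : (XC e : ℝ) ^ (s - 1) ≤ (xN e.1 : ℝ) ^ e1 * (zN e.2 : ℝ) ^ e2 := by
      calc (XC e : ℝ) ^ (s - 1) = (XC e : ℝ) ^ (((s - 1 : ℕ) : ℝ)) := by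
            rw [Real.rpow_natCast]
        _ = (XC e : ℝ) ^ (e1 + e2) := by rw [hcast1, he12]
        _ = (XC e : ℝ) ^ e1 * (XC e : ℝ) ^ e2 := by
            rw [Real.rpow_add' (Nat.cast_nonneg _) (by rw [he12]; linarith)]
        _ ≤ (xN e.1 : ℝ) ^ e1 * (zN e.2 : ℝ) ^ e2 := by
            apply mul_le_mul (Real.rpow_le_rpow (Nat.cast_nonneg _) h1R he10)
              (Real.rpow_le_rpow (Nat.cast_nonneg _) h2R he20)
              (Real.rpow_nonneg (Nat.cast_nonneg _) _)
              (Real.rpow_nonneg (Nat.cast_nonneg _) _)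
    have hYr : (YC e : ℝ) ^ (t - 1) ≤ (xN e.2 : ℝ) ^ ((t : ℝ) - 1) := by
      calc (YC e : ℝ) ^ (t - 1) = (YC e : ℝ) ^ (((t - 1 : ℕ) : ℝ)) := by
            rw [Real.rpow_natCast]
        _ = (YC e : ℝ) ^ ((t : ℝ) - 1) := by rw [hcast2]
        _ ≤ (xN e.2 : ℝ) ^ ((t : ℝ) - 1) :=
            Real.rpow_le_rpow (Nat.cast_nonneg _) h3R (by linarith)
    calc (XC e : ℝ) ^ (s - 1) * (YC e : ℝ) ^ (t - 1)
        ≤ ((xN e.1 : ℝ) ^ e1 * (zN e.2 : ℝ) ^ e2) * (xN e.2 : ℝ) ^ ((t : ℝ) - 1) := by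
          apply mul_le_mul hXr hYr (by positivity)
            (mul_nonneg (Real.rpow_nonneg (Nat.cast_nonneg _) _)
              (Real.rpow_nonneg (Nat.cast_nonneg _) _))
      _ = F e.1 * G e.2 := by rw [hFdef, hGdef]; ring
  have step3 : ∑ e ∈ E, F e.1 * G e.2 ≤
      (∑ e ∈ E, (F e.1) ^ p) ^ (1 / p) * (∑ e ∈ E, (G e.2) ^ q) ^ (1 / q) :=
    Real.inner_le_Lp_mul_Lq_of_nonneg (s := E) hpq (fun e _ => hF0 e.1) (fun e _ => hG0 e.2)
  have hFs : ∑ e ∈ E, (F e.1) ^ p = ∑ u : Fin n, (yN u : ℝ) * (xN u : ℝ) ^ ((s : ℝ) / t) := by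
    rw [hfst (fun u => (F u) ^ p)]
    apply Finset.sum_congr rfl
    intro u _
    congr 1
    rw [hFdef]
    rw [← Real.rpow_mul (Nat.cast_nonneg _)]
    congr 1
    rw [he1def, hpdef]
    field_simp
  have hGs : ∑ e ∈ E, (G e.2) ^ q =
      ∑ w : Fin n, (zN w : ℝ) ^ (1 + e2 * q) * (xN w : ℝ) ^ (((t : ℝ) - 1) * q) := by
    rw [hsnd (fun w => (G w) ^ q)]
    apply Finset.sum_congr rfl
    intro w _
    rw [hGdef]
    rw [Real.mul_rpow (Real.rpow_nonneg (Nat.cast_nonneg _) _)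
      (Real.rpow_nonneg (Nat.cast_nonneg _) _),
      ← Real.rpow_mul (Nat.cast_nonneg _), ← Real.rpow_mul (Nat.cast_nonneg _)]
    rw [Real.rpow_add' (Nat.cast_nonneg _)
      (by positivity : (1 : ℝ) + e2 * q ≠ 0), Real.rpow_one]
    ring
  have hanal := kst_analytic s t hs hst n hn Finset.univ (by simp)
    (fun v => (xN v : ℝ)) (fun v => (yN v : ℝ)) (fun v => (zN v : ℝ))
    (fun v => Nat.cast_nonneg _) (fun v => Nat.cast_nonneg _) (fun v => Nat.cast_nonneg _)
    (by
      intro v _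
      have := hbud v
      push_cast
      exact_mod_cast this)
    ((s : ℝ) / t) (1 + e2 * q) (((t : ℝ) - 1) * q)
    rfl
    (by rw [he2def, he1def, hqdef])
    (by rw [hqdef])
  have h1p : 1 / p = (s : ℝ) / ((s : ℝ) + t) := by rw [hpdef, one_div_div]
  have h1q : 1 / q = (t : ℝ) / ((s : ℝ) + t) := by rw [hqdef, one_div_div]
  calc ((s.factorial * t.factorial : ℕ) : ℝ) * (kstCount s t D : ℝ)
      ≤ ∑ e ∈ E, (XC e : ℝ) ^ (s - 1) * (YC e : ℝ) ^ (t - 1) := step1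
    _ ≤ ∑ e ∈ E, F e.1 * G e.2 := step2
    _ ≤ (∑ e ∈ E, (F e.1) ^ p) ^ (1 / p) * (∑ e ∈ E, (G e.2) ^ q) ^ (1 / q) := step3
    _ = (∑ u : Fin n, (yN u : ℝ) * (xN u : ℝ) ^ ((s : ℝ) / t)) ^ ((s : ℝ) / ((s : ℝ) + t)) *
        (∑ w : Fin n, (zN w : ℝ) ^ (1 + e2 * q) * (xN w : ℝ) ^ (((t : ℝ) - 1) * q)) ^
          ((t : ℝ) / ((s : ℝ) + t)) := by
        rw [hFs, hGs, h1p, h1q]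
    _ ≤ ((s : ℝ) / (s + t)) ^ s * ((t : ℝ) / (s + t)) ^ t * (n : ℝ) ^ (s + t) := hanal


set_option maxHeartbeats 1600000 in
theorem kst_final_numeric (s t n : ℕ) (hs : 2 ≤ s) (hst : s ≤ t) (ε : ℝ) (hε : 0 < ε)
    (hn2k : 2 * (s + t) ≤ n)
    (hbig : (((s + t) ^ 2 * 2 ^ (s + t) * (s + t).factorial : ℕ) : ℝ) ≤
      ε * ((s.factorial * t.factorial : ℕ) : ℝ) * n) :
    ((s : ℝ) / (s + t)) ^ s * ((t : ℝ) / (s + t)) ^ t * (n : ℝ) ^ (s + t) ≤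
      (((s + t).choose s : ℝ) * ((s : ℝ) / (s + t)) ^ s * ((t : ℝ) / (s + t)) ^ t + ε) *
        (n.choose (s + t) : ℝ) * ((s.factorial * t.factorial : ℕ) : ℝ) := by
  set k : ℕ := s + t with hk
  have hk1 : 1 ≤ k := by omega
  have hkn : k ≤ n := by omega
  have hn0 : 0 < n := by omega
  have hsR : (2 : ℝ) ≤ (s : ℝ) := by exact_mod_cast hs
  have hstR : (s : ℝ) ≤ (t : ℝ) := by exact_mod_cast hst
  have hkR0 : (0 : ℝ) < ((s : ℝ) + t) := by linarith
  have hnR0 : (0 : ℝ) < (n : ℝ) := by exact_mod_cast hn0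
  have hknR : ((k : ℕ) : ℝ) ≤ (n : ℝ) := by exact_mod_cast hkn
  set al : ℝ := (s : ℝ) / ((s : ℝ) + t) with hal
  set be : ℝ := (t : ℝ) / ((s : ℝ) + t) with hbe
  set τ : ℝ := al ^ s * be ^ t with hτ
  have hal0 : 0 < al := by rw [hal]; exact div_pos (by linarith) hkR0
  have hbe0 : 0 < be := by rw [hbe]; exact div_pos (by linarith) hkR0
  have hal1 : al ≤ 1 := by rw [hal, div_le_one hkR0]; linarith
  have hbe1 : be ≤ 1 := by rw [hbe, div_le_one hkR0]; linarith
  have hτ0 : 0 < τ := by rw [hτ]; exact mul_pos (pow_pos hal0 s) (pow_pos hbe0 t)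
  have hτ1 : τ ≤ 1 := by
    rw [hτ]
    calc al ^ s * be ^ t ≤ 1 * 1 := by
          apply mul_le_mul (pow_le_one₀ hal0.le hal1) (pow_le_one₀ hbe0.le hbe1)
            (by positivity) (by norm_num)
      _ = 1 := by norm_num
  -- nat identities
  have hCk : (k.choose s) * (s.factorial * t.factorial) = k.factorial := by
    have h1 : k - s = t := by omega
    have := Nat.choose_mul_factorial_mul_factorial (show s ≤ k by omega)
    rw [h1] at this
    rw [← this]; ring
  have hdesc : k.factorial * (n.choose k) = n.descFactorial k :=
    (Nat.descFactorial_eq_factorial_mul_choose n k).symm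
  have hdlow : (n - k) ^ k ≤ n.descFactorial k :=
    le_trans (Nat.pow_le_pow_left (by omega : n - k ≤ n + 1 - k) k)
      (Nat.pow_sub_le_descFactorial n k)
  have hdup : n.descFactorial k ≤ n ^ k := Nat.descFactorial_le_pow n k
  set descR : ℝ := (n.descFactorial k : ℝ) with hdescR
  set CnkR : ℝ := (n.choose k : ℝ) with hCnkR
  have hCnk0 : 0 ≤ CnkR := by rw [hCnkR]; positivity
  have hsub_cast : ((n - k : ℕ) : ℝ) = (n : ℝ) - k := by
    push_cast [hkn]; ring
  have hdlowR : ((n : ℝ) - k) ^ k ≤ descR := by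
    rw [← hsub_cast, hdescR]
    exact_mod_cast hdlow
  have hdupR : descR ≤ (n : ℝ) ^ k := by
    rw [hdescR]
    exact_mod_cast hdup
  -- Bernoulli bound
  have hpow_split : (n : ℝ) ^ k = (n : ℝ) * (n : ℝ) ^ (k - 1) := by
    rw [← pow_succ']
    congr 1
    omega
  have hber : (n : ℝ) ^ k - ((k : ℕ) : ℝ) ^ 2 * (n : ℝ) ^ (k - 1) ≤ ((n : ℝ) - k) ^ k := by
    have hdivle : ((k : ℕ) : ℝ) / n ≤ 1 := by
      rw [div_le_one hnR0]; exact hknR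
    have h1 := one_add_mul_le_pow (a := -(((k : ℕ) : ℝ) / n)) (by linarith) k
    have h2 : (1 : ℝ) + -(((k : ℕ) : ℝ) / n) = ((n : ℝ) - k) / n := by
      field_simp
      ring
    rw [h2] at h1
    rw [div_pow] at h1
    have h4 := mul_le_mul_of_nonneg_right h1 (le_of_lt (pow_pos hnR0 k))
    have h5 : ((n : ℝ) - k) ^ k / (n : ℝ) ^ k * (n : ℝ) ^ k = ((n : ℝ) - k) ^ k := by
      field_simp
    rw [h5] at h4
    calc (n : ℝ) ^ k - ((k : ℕ) : ℝ) ^ 2 * (n : ℝ) ^ (k - 1)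
        = (1 + ↑k * -(((k : ℕ) : ℝ) / n)) * (n : ℝ) ^ k := by
          rw [hpow_split]
          field_simp
          ring
      _ ≤ ((n : ℝ) - k) ^ k := h4
  -- lower bound on choose
  have hhalf : (n : ℝ) / 2 ≤ (n : ℝ) - k := by
    have : (2 * k : ℕ) ≤ n := hn2k
    have h2k : ((2 * k : ℕ) : ℝ) ≤ (n : ℝ) := by exact_mod_cast this
    push_cast at h2k
    linarith
  have hCnk_low : ((n : ℝ) / 2) ^ k ≤ (k.factorial : ℝ) * CnkR := by
    calc ((n : ℝ) / 2) ^ k ≤ ((n : ℝ) - k) ^ k := by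
          apply pow_le_pow_left₀ (by positivity) hhalf
      _ ≤ descR := hdlowR
      _ = (k.factorial : ℝ) * CnkR := by
          rw [hdescR, hCnkR, ← hdesc]; push_cast; ring
  -- key: k² n^{k-1} ≤ ε * s!t! * CnkR
  have hkey : ((k : ℕ) : ℝ) ^ 2 * (n : ℝ) ^ (k - 1) ≤
      ε * ((s.factorial * t.factorial : ℕ) : ℝ) * CnkR := by
    have h2k0 : (0 : ℝ) < (2 : ℝ) ^ k * (k.factorial : ℝ) := by positivity
    rw [← mul_le_mul_iff_of_pos_right h2k0]
    have hbigR : ((k : ℕ) : ℝ) ^ 2 * (2 : ℝ) ^ k * (k.factorial : ℝ) ≤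
        ε * ((s.factorial * t.factorial : ℕ) : ℝ) * n := by
      calc ((k : ℕ) : ℝ) ^ 2 * (2 : ℝ) ^ k * (k.factorial : ℝ)
          = ((k ^ 2 * 2 ^ k * k.factorial : ℕ) : ℝ) := by push_cast; ring
        _ ≤ ε * ((s.factorial * t.factorial : ℕ) : ℝ) * n := by
            rw [hk]; exact hbig
    calc ((k : ℕ) : ℝ) ^ 2 * (n : ℝ) ^ (k - 1) * ((2 : ℝ) ^ k * (k.factorial : ℝ))
        = (((k : ℕ) : ℝ) ^ 2 * (2 : ℝ) ^ k * (k.factorial : ℝ)) * (n : ℝ) ^ (k - 1) := by ring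
      _ ≤ (ε * ((s.factorial * t.factorial : ℕ) : ℝ) * n) * (n : ℝ) ^ (k - 1) := by
          apply mul_le_mul_of_nonneg_right hbigR (by positivity)
      _ = ε * ((s.factorial * t.factorial : ℕ) : ℝ) * ((n : ℝ) * (n : ℝ) ^ (k - 1)) := by ring
      _ = ε * ((s.factorial * t.factorial : ℕ) : ℝ) * ((n : ℝ) ^ k) := by rw [← hpow_split]
      _ = ε * ((s.factorial * t.factorial : ℕ) : ℝ) * (((n : ℝ) / 2) ^ k * 2 ^ k) := by
          rw [div_pow]
          field_simp
      _ ≤ ε * ((s.factorial * t.factorial : ℕ) : ℝ) * ((k.factorial : ℝ) * CnkR * 2 ^ k) := by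
          apply mul_le_mul_of_nonneg_left ?_ (by positivity)
          apply mul_le_mul_of_nonneg_right hCnk_low (by positivity)
      _ = ε * ((s.factorial * t.factorial : ℕ) : ℝ) * CnkR * ((2 : ℝ) ^ k * (k.factorial : ℝ)) := by
          ring
  -- assemble
  have hmain : τ * (n : ℝ) ^ k ≤ τ * descR + ε * ((s.factorial * t.factorial : ℕ) : ℝ) * CnkR := by
    have h1 : τ * (n : ℝ) ^ k - τ * descR = τ * ((n : ℝ) ^ k - descR) := by ring
    have h2 : (n : ℝ) ^ k - descR ≤ ((k : ℕ) : ℝ) ^ 2 * (n : ℝ) ^ (k - 1) := by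
      have := hdlowR
      nlinarith [hber]
    nlinarith [mul_le_mul_of_nonneg_left h2 hτ0.le, hτ1,
      mul_le_mul_of_nonneg_right hτ1 (by nlinarith [hdupR] : (0:ℝ) ≤ (n : ℝ) ^ k - descR)]
  -- rewrite the goal
  have hRHS : (((s + t).choose s : ℝ) * al ^ s * be ^ t + ε) * CnkR *
      ((s.factorial * t.factorial : ℕ) : ℝ) =
      τ * descR + ε * ((s.factorial * t.factorial : ℕ) : ℝ) * CnkR := by
    have hc1 : ((k.choose s : ℕ) : ℝ) * ((s.factorial * t.factorial : ℕ) : ℝ) =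
        (k.factorial : ℝ) := by exact_mod_cast congrArg (Nat.cast : ℕ → ℝ) hCk
    have hc2 : (k.factorial : ℝ) * CnkR = descR := by
      rw [hCnkR, hdescR]; exact_mod_cast hdesc
    calc (((s + t).choose s : ℝ) * al ^ s * be ^ t + ε) * CnkR *
        ((s.factorial * t.factorial : ℕ) : ℝ)
        = τ * (((k.choose s : ℕ) : ℝ) * ((s.factorial * t.factorial : ℕ) : ℝ) * CnkR) +
          ε * ((s.factorial * t.factorial : ℕ) : ℝ) * CnkR := by
          rw [hτ, hk]; ring
      _ = τ * descR + ε * ((s.factorial * t.factorial : ℕ) : ℝ) * CnkR := by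
          rw [hc1, hc2]
  calc ((s : ℝ) / (s + t)) ^ s * ((t : ℝ) / (s + t)) ^ t * (n : ℝ) ^ (s + t)
      = τ * (n : ℝ) ^ k := by rw [hτ, hal, hbe, hk]
    _ ≤ τ * descR + ε * ((s.factorial * t.factorial : ℕ) : ℝ) * CnkR := hmain
    _ = (((s + t).choose s : ℝ) * al ^ s * be ^ t + ε) * CnkR *
        ((s.factorial * t.factorial : ℕ) : ℝ) := hRHS.symm
    _ = (((s + t).choose s : ℝ) * ((s : ℝ) / (s + t)) ^ s * ((t : ℝ) / (s + t)) ^ t + ε) *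
        (n.choose (s + t) : ℝ) * ((s.factorial * t.factorial : ℕ) : ℝ) := by
        rw [hal, hbe, hCnkR, hk]

theorem kst_inducibility_upper (s t : ℕ) (hs : 2 ≤ s) (hst : s ≤ t)
    (ε : ℝ) (hε : 0 < ε) :
    ∃ N : ℕ, ∀ n : ℕ, N ≤ n → ∀ D : Fin n → Fin n → Prop,
      (kstCount s t D : ℝ) ≤
        (((s + t).choose s : ℝ) * ((s : ℝ) / (s + t)) ^ s * ((t : ℝ) / (s + t)) ^ t + ε) *
          (n.choose (s + t) : ℝ) := by
  have hfac0 : (0 : ℝ) < ((s.factorial * t.factorial : ℕ) : ℝ) := by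
    have := Nat.factorial_pos s
    have := Nat.factorial_pos t
    positivity
  obtain ⟨N₀, hN₀⟩ := exists_nat_ge
    ((((s + t) ^ 2 * 2 ^ (s + t) * (s + t).factorial : ℕ) : ℝ) /
      (ε * ((s.factorial * t.factorial : ℕ) : ℝ)))
  refine ⟨max (2 * (s + t)) N₀, ?_⟩
  intro n hn D
  have hn2k : 2 * (s + t) ≤ n := le_trans (le_max_left _ _) hn
  have hnN : N₀ ≤ n := le_trans (le_max_right _ _) hn
  have hn0 : 0 < n := by omega
  have hbig : (((s + t) ^ 2 * 2 ^ (s + t) * (s + t).factorial : ℕ) : ℝ) ≤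
      ε * ((s.factorial * t.factorial : ℕ) : ℝ) * n := by
    rw [div_le_iff₀ (by positivity)] at hN₀
    calc (((s + t) ^ 2 * 2 ^ (s + t) * (s + t).factorial : ℕ) : ℝ)
        ≤ (N₀ : ℝ) * (ε * ((s.factorial * t.factorial : ℕ) : ℝ)) := hN₀
      _ ≤ (n : ℝ) * (ε * ((s.factorial * t.factorial : ℕ) : ℝ)) := by
          apply mul_le_mul_of_nonneg_right (by exact_mod_cast hnN) (by positivity)
      _ = ε * ((s.factorial * t.factorial : ℕ) : ℝ) * n := by ring
  have hcore := kst_core s t hs hst n hn0 D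
  have hnum := kst_final_numeric s t n hs hst ε hε hn2k hbig
  have hchain := le_trans hcore hnum
  have hfinal : (kstCount s t D : ℝ) * ((s.factorial * t.factorial : ℕ) : ℝ) ≤
      ((((s + t).choose s : ℝ) * ((s : ℝ) / (s + t)) ^ s * ((t : ℝ) / (s + t)) ^ t + ε) *
        (n.choose (s + t) : ℝ)) * ((s.factorial * t.factorial : ℕ) : ℝ) := by
    calc (kstCount s t D : ℝ) * ((s.factorial * t.factorial : ℕ) : ℝ)
        = ((s.factorial * t.factorial : ℕ) : ℝ) * (kstCount s t D : ℝ) := mul_comm _ _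
      _ ≤ (((s + t).choose s : ℝ) * ((s : ℝ) / (s + t)) ^ s * ((t : ℝ) / (s + t)) ^ t + ε) *
          (n.choose (s + t) : ℝ) * ((s.factorial * t.factorial : ℕ) : ℝ) := hchain
      _ = _ := by ring
  exact le_of_mul_le_mul_right hfinal hfac0
end

section
/- For all integers 2 ≤ s ≤ t and every ε > 0, there exists N such that for every n ≥ N there exists a digraph D on n vertices in which the number of (s+t)-element vertex subsets inducing a copy of the complete bipartite digraph K⃗_{s,t} is at least ( C(s+t,s)·(s/(s+t))^s·(t/(s+t))^t − ε )·C(n, s+t). -/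
lemma pow_lipschitz (k : ℕ) : ∀ {a x : ℝ}, 0 ≤ x → x ≤ a → a ≤ 1 → a ^ k - x ^ k ≤ k * (a - x) := by
  induction k with
  | zero => intro a x _ _ _; simp
  | succ k ih =>
    intro a x h0 h1 h2
    have hxk : x ^ k ≤ 1 := pow_le_one₀ h0 (h1.trans h2)
    have hxk0 : 0 ≤ x ^ k := pow_nonneg h0 k
    have hak : a ^ k - x ^ k ≤ k * (a - x) := ih h0 h1 h2
    have hax : 0 ≤ a - x := by linarith
    have ha0 : 0 ≤ a := h0.trans h1
    have e : a ^ (k+1) - x ^ (k+1) = a * (a ^ k - x ^ k) + (a - x) * x ^ k := by ring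
    have h5 : 0 ≤ a ^ k - x ^ k := by
      have := pow_le_pow_left₀ h0 h1 k; linarith
    have : a * (a ^ k - x ^ k) ≤ 1 * (k * (a - x)) := by
      calc a * (a ^ k - x ^ k) ≤ 1 * (a ^ k - x ^ k) := by nlinarith
        _ ≤ 1 * (k * (a - x)) := by nlinarith
    have h6 : (a - x) * x ^ k ≤ (a - x) * 1 := by nlinarith
    push_cast
    nlinarith

set_option maxHeartbeats 1000000 in
theorem main_analysis (s t : ℕ) (hs : 2 ≤ s) (hst : s ≤ t) (ε : ℝ) (hε : 0 < ε) :
    ∃ N : ℕ, ∀ n : ℕ, N ≤ n →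
      (((s + t).choose s : ℝ) * ((s : ℝ) / (s + t)) ^ s * ((t : ℝ) / (s + t)) ^ t - ε) *
        (n.choose (s + t) : ℝ) ≤ (((s * n / (s + t)).choose s * (n - s * n / (s + t)).choose t : ℕ) : ℝ) := by
  classical
  set k := s + t with hkdef
  have hk : 0 < k := by omega
  set C := k.choose s with hCdef
  have hCpos : 0 < C := Nat.choose_pos (by omega)
  refine ⟨k * k + ⌈(C : ℝ) * ((s : ℝ) ^ 2 + (t : ℝ) ^ 2) / ε⌉₊ + 1, ?_⟩
  intro n hn
  set m := s * n / k with hmdef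
  have hkk : k * k ≤ n := by omega
  have hn0 : 0 < n := Nat.lt_of_lt_of_le (Nat.succ_pos _) hn
  -- basic nat facts
  have hdiv1 : m * k ≤ s * n := Nat.div_mul_le_self _ _
  have hdiv2 : s * n < (m + 1) * k := Nat.lt_mul_of_div_lt (by omega) (by omega)
  have hkn : k ≤ n := le_trans (Nat.le_mul_of_pos_left k hk) hkk
  have hms : s ≤ m := (Nat.le_div_iff_mul_le hk).2 (Nat.mul_le_mul_left s hkn)
  have hsk : s ≤ k := by omega
  have h4 : s * n ≤ n * k := le_trans (Nat.mul_le_mul_right n hsk) (le_of_eq (Nat.mul_comm k n))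
  have hmn : m ≤ n := Nat.le_of_mul_le_mul_right (hdiv1.trans h4) hk
  have hmt : m + t ≤ n := by
    have h1 : (m + t) * k ≤ s * n + t * k := by nlinarith [hdiv1]
    have h2 : t * k ≤ t * n := Nat.mul_le_mul_left t hkn
    have h3 : s * n + t * n = n * k := by rw [hkdef]; ring
    exact Nat.le_of_mul_le_mul_right (by omega) hk
  -- real setup
  have hnr : (0:ℝ) < (n : ℝ) := by exact_mod_cast hn0
  have hkrpos : (0:ℝ) < (k : ℝ) := by exact_mod_cast hk
  have hsr2 : (2:ℝ) ≤ (s : ℝ) := by exact_mod_cast hs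
  have htr2 : (2:ℝ) ≤ (t : ℝ) := by
    have : (2:ℕ) ≤ t := le_trans hs hst; exact_mod_cast this
  have hkr : (k : ℝ) = (s : ℝ) + (t : ℝ) := by rw [hkdef]; push_cast; ring
  set σ : ℝ := (s : ℝ) / ((s : ℝ) + (t : ℝ)) with hσdef
  set τ : ℝ := (t : ℝ) / ((s : ℝ) + (t : ℝ)) with hτdef
  set A : ℝ := ((m + 1 - s : ℕ) : ℝ) with hAdef
  set Bv : ℝ := ((n - m - t : ℕ) : ℝ) with hBvdef
  have hAeq : A = (m : ℝ) + 1 - (s : ℝ) := by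
    have hsm : s ≤ m + 1 := by omega
    rw [hAdef, Nat.cast_sub hsm]; push_cast; ring
  have hBveq : Bv = (n : ℝ) - (m : ℝ) - (t : ℝ) := by
    have h1 : t ≤ n - m := by omega
    rw [hBvdef, Nat.cast_sub h1, Nat.cast_sub hmn]
  have hdiv1R : (m : ℝ) * (k : ℝ) ≤ (s : ℝ) * (n : ℝ) := by exact_mod_cast hdiv1
  have hdiv2R : (s : ℝ) * (n : ℝ) < ((m : ℝ) + 1) * (k : ℝ) := by exact_mod_cast hdiv2
  have hστ : σ + τ = 1 := by rw [hσdef, hτdef]; field_simp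
  have hσnr : σ * (n : ℝ) = (s : ℝ) * (n : ℝ) / (k : ℝ) := by
    rw [hσdef, hkr]; ring
  have hmσ : (m : ℝ) ≤ σ * (n : ℝ) := by
    rw [hσnr, le_div_iff₀ hkrpos]; linarith
  have hσm : σ * (n : ℝ) < (m : ℝ) + 1 := by
    rw [hσnr, div_lt_iff₀ hkrpos]; linarith
  have hA_ub : A ≤ σ * (n : ℝ) := by rw [hAeq]; linarith
  have hA_lb : σ * (n : ℝ) - (s : ℝ) ≤ A := by rw [hAeq]; linarith
  have hτnr : τ * (n : ℝ) = (n : ℝ) - σ * (n : ℝ) := by linear_combination (n : ℝ) * hστ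
  have hB_ub : Bv ≤ τ * (n : ℝ) := by rw [hBveq, hτnr]; linarith
  have hB_lb : τ * (n : ℝ) - (t : ℝ) ≤ Bv := by rw [hBveq, hτnr]; linarith
  have hσ0 : 0 < σ := by rw [hσdef]; positivity
  have hτ0 : 0 < τ := by rw [hτdef]; positivity
  have hσ1 : σ ≤ 1 := by rw [hσdef, div_le_one (by linarith)]; linarith
  have hτ1 : τ ≤ 1 := by rw [hτdef, div_le_one (by linarith)]; linarith
  set x : ℝ := A / (n : ℝ) with hxdef
  set y : ℝ := Bv / (n : ℝ) with hydef
  have hA0 : 0 ≤ A := by rw [hAdef]; positivity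
  have hBv0 : 0 ≤ Bv := by rw [hBvdef]; positivity
  have hx0 : 0 ≤ x := by rw [hxdef]; positivity
  have hy0 : 0 ≤ y := by rw [hydef]; positivity
  have hxσ : x ≤ σ := by rw [hxdef, div_le_iff₀ hnr]; linarith
  have hyτ : y ≤ τ := by rw [hydef, div_le_iff₀ hnr]; linarith
  have hxnr : x * (n : ℝ) = A := div_mul_cancel₀ A (ne_of_gt hnr)
  have hynr : y * (n : ℝ) = Bv := div_mul_cancel₀ Bv (ne_of_gt hnr)
  have hσx : σ - x ≤ (s : ℝ) / (n : ℝ) := by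
    rw [le_div_iff₀ hnr]
    have e : (σ - x) * (n : ℝ) = σ * (n : ℝ) - A := by rw [sub_mul, hxnr]
    linarith
  have hτy : τ - y ≤ (t : ℝ) / (n : ℝ) := by
    rw [le_div_iff₀ hnr]
    have e : (τ - y) * (n : ℝ) = τ * (n : ℝ) - Bv := by rw [sub_mul, hynr]
    linarith
  -- choose bounds
  have hch1 : (n.choose k : ℝ) ≤ (n : ℝ) ^ k / ((Nat.factorial k) : ℝ) :=
    Nat.choose_le_pow_div k n
  have hch2 : A ^ s ≤ ((Nat.factorial s) : ℝ) * (m.choose s : ℝ) := by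
    have h := Nat.pow_sub_le_descFactorial m s
    rw [Nat.descFactorial_eq_factorial_mul_choose] at h
    rw [hAdef]
    exact_mod_cast h
  have hch3 : Bv ^ t ≤ ((Nat.factorial t) : ℝ) * ((n - m).choose t : ℝ) := by
    have h0 : (n - m - t) ^ t ≤ (n - m + 1 - t) ^ t := Nat.pow_le_pow_left (by omega) t
    have h := h0.trans (Nat.pow_sub_le_descFactorial (n - m) t)
    rw [Nat.descFactorial_eq_factorial_mul_choose] at h
    rw [hBvdef]
    exact_mod_cast h
  have hfac : ((Nat.factorial k) : ℝ) =
      (C : ℝ) * ((Nat.factorial s) : ℝ) * ((Nat.factorial t) : ℝ) := by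
    have h := Nat.choose_mul_factorial_mul_factorial (show s ≤ k by omega)
    have hts : k - s = t := by omega
    rw [hts] at h
    exact_mod_cast h.symm
  have hεn : (C : ℝ) * ((s : ℝ) ^ 2 + (t : ℝ) ^ 2) ≤ ε * (n : ℝ) := by
    have hceil : ⌈(C : ℝ) * ((s : ℝ) ^ 2 + (t : ℝ) ^ 2) / ε⌉₊ ≤ n := by omega
    have h2 := Nat.ceil_le.1 hceil
    rw [div_le_iff₀ hε] at h2
    linarith
  -- the scalar inequality
  have hCr0 : (0:ℝ) < (C : ℝ) := by exact_mod_cast hCpos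
  set Brkt : ℝ := (C : ℝ) * σ ^ s * τ ^ t - ε with hBrkt
  rcases le_or_gt Brkt 0 with hB | hB
  · have h1 : Brkt * (n.choose k : ℝ) ≤ 0 :=
      mul_nonpos_of_nonpos_of_nonneg hB (Nat.cast_nonneg _)
    exact h1.trans (Nat.cast_nonneg _)
  · have hscalar : Brkt ≤ (C : ℝ) * x ^ s * y ^ t := by
      have l1 : σ ^ s - x ^ s ≤ (s : ℝ) * ((s : ℝ) / (n : ℝ)) := by
        have hl := pow_lipschitz s hx0 hxσ hσ1
        have h2 : (s:ℝ) * (σ - x) ≤ (s : ℝ) * ((s : ℝ) / (n : ℝ)) :=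
          mul_le_mul_of_nonneg_left hσx (by linarith)
        linarith
      have l2 : τ ^ t - y ^ t ≤ (t : ℝ) * ((t : ℝ) / (n : ℝ)) := by
        have hl := pow_lipschitz t hy0 hyτ hτ1
        have h2 : (t:ℝ) * (τ - y) ≤ (t : ℝ) * ((t : ℝ) / (n : ℝ)) :=
          mul_le_mul_of_nonneg_left hτy (by linarith)
        linarith
      have hτt1 : τ ^ t ≤ 1 := pow_le_one₀ hτ0.le hτ1
      have hxs1 : x ^ s ≤ 1 := pow_le_one₀ hx0 (hxσ.trans hσ1)
      have hτt0 : 0 ≤ τ ^ t := pow_nonneg hτ0.le t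
      have hxs0 : 0 ≤ x ^ s := pow_nonneg hx0 s
      have hd1 : 0 ≤ σ ^ s - x ^ s := by
        have := pow_le_pow_left₀ hx0 hxσ s; linarith
      have hd2 : 0 ≤ τ ^ t - y ^ t := by
        have := pow_le_pow_left₀ hy0 hyτ t; linarith
      have hmain : σ ^ s * τ ^ t - x ^ s * y ^ t ≤
          (s : ℝ) * ((s : ℝ) / (n : ℝ)) + (t : ℝ) * ((t : ℝ) / (n : ℝ)) := by
        have e : σ ^ s * τ ^ t - x ^ s * y ^ t
            = (σ ^ s - x ^ s) * τ ^ t + x ^ s * (τ ^ t - y ^ t) := by ring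
        have hb1 : (σ ^ s - x ^ s) * τ ^ t ≤ ((s : ℝ) * ((s : ℝ) / (n : ℝ))) * 1 :=
          mul_le_mul l1 hτt1 hτt0 (by positivity)
        have hb2 : x ^ s * (τ ^ t - y ^ t) ≤ 1 * ((t : ℝ) * ((t : ℝ) / (n : ℝ))) :=
          mul_le_mul hxs1 l2 hd2 zero_le_one
        rw [mul_one] at hb1
        rw [one_mul] at hb2
        linarith
      have hq : (s : ℝ) * ((s : ℝ) / (n : ℝ)) + (t : ℝ) * ((t : ℝ) / (n : ℝ))
          = ((s : ℝ) ^ 2 + (t : ℝ) ^ 2) / (n : ℝ) := by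
        rw [eq_div_iff (ne_of_gt hnr)]
        field_simp
      have hε2 : (C : ℝ) * (((s : ℝ) ^ 2 + (t : ℝ) ^ 2) / (n : ℝ)) ≤ ε := by
        rw [mul_div_assoc', div_le_iff₀ hnr]
        linarith
      have h5 : (C : ℝ) * (σ ^ s * τ ^ t - x ^ s * y ^ t) ≤ ε := by
        have h5' := mul_le_mul_of_nonneg_left hmain hCr0.le
        rw [hq] at h5'
        exact h5'.trans hε2
      have hre : (C : ℝ) * (σ ^ s * τ ^ t - x ^ s * y ^ t)
          = (C : ℝ) * σ ^ s * τ ^ t - (C : ℝ) * x ^ s * y ^ t := by ring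
      rw [hBrkt]
      linarith [h5, hre.symm.le, hre.le]
    calc Brkt * (n.choose k : ℝ)
        ≤ Brkt * ((n : ℝ) ^ k / ((Nat.factorial k) : ℝ)) :=
          mul_le_mul_of_nonneg_left hch1 hB.le
      _ ≤ ((C : ℝ) * x ^ s * y ^ t) * ((n : ℝ) ^ k / ((Nat.factorial k) : ℝ)) := by
          apply mul_le_mul_of_nonneg_right hscalar
          positivity
      _ = A ^ s * Bv ^ t / (((Nat.factorial s) : ℝ) * ((Nat.factorial t) : ℝ)) := by
          rw [hfac, show (n : ℝ) ^ k = (n : ℝ) ^ s * (n : ℝ) ^ t by rw [hkdef, pow_add],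
            hxdef, hydef]
          have hs0 : ((Nat.factorial s : ℕ) : ℝ) ≠ 0 := by positivity
          have ht0 : ((Nat.factorial t : ℕ) : ℝ) ≠ 0 := by positivity
          field_simp
          have hn0' : (n : ℝ) ≠ 0 := ne_of_gt hnr
          have h1 : (n : ℝ) ^ s * ((n : ℝ) ^ s)⁻¹ = 1 := mul_inv_cancel₀ (pow_ne_zero _ hn0')
          have h2 : (n : ℝ) ^ t * ((n : ℝ) ^ t)⁻¹ = 1 := mul_inv_cancel₀ (pow_ne_zero _ hn0')
          linear_combination (A ^ s * Bv ^ t * ((n : ℝ) ^ t * ((n : ℝ) ^ t)⁻¹)) * h1 + (A ^ s * Bv ^ t) * h2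
      _ ≤ (m.choose s : ℝ) * ((n - m).choose t : ℝ) := by
          rw [div_le_iff₀ (by positivity)]
          have hBt0 : 0 ≤ Bv ^ t := pow_nonneg hBv0 t
          have hmm := mul_le_mul hch2 hch3 hBt0 (by positivity)
          exact hmm.trans (le_of_eq (by ring))
      _ = ((m.choose s * (n - m).choose t : ℕ) : ℝ) := by push_cast; ring

lemma count_lower (s t n m : ℕ) (hm : m ≤ n) :
    m.choose s * (n - m).choose t ≤
      kstCount s t (fun v w : Fin n => (v : ℕ) < m ∧ ¬ ((w : ℕ) < m)) := by
  classical
  set X : Finset (Fin n) := Finset.map (Fin.castLEEmb hm) Finset.univ with hX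
  have hXmem : ∀ v : Fin n, v ∈ X ↔ (v : ℕ) < m := by
    intro v
    simp only [hX, Finset.mem_map, Finset.mem_univ, true_and]
    constructor
    · rintro ⟨i, rfl⟩; exact i.2
    · rintro hv; exact ⟨⟨(v : ℕ), hv⟩, by ext; simp⟩
  have hXcard : X.card = m := by simp [hX]
  have hXc : Xᶜ.card = n - m := by
    rw [Finset.card_compl, hXcard, Fintype.card_fin]
  set src : Finset (Finset (Fin n) × Finset (Fin n)) :=
    X.powersetCard s ×ˢ Xᶜ.powersetCard t with hsrc
  set tgt : Set (Finset (Fin n)) := {S : Finset (Fin n) | S.card = s + t ∧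
    ∃ A ⊆ S, A.card = s ∧ ∀ u ∈ S, ∀ w ∈ S,
      ((fun v w : Fin n => (v : ℕ) < m ∧ ¬ ((w : ℕ) < m)) u w ↔ (u ∈ A ∧ w ∉ A))} with htgt
  have hmemsrc : ∀ p ∈ src, p.1 ⊆ X ∧ p.1.card = s ∧ p.2 ⊆ Xᶜ ∧ p.2.card = t := by
    intro p hp
    rw [hsrc, Finset.mem_product, Finset.mem_powersetCard, Finset.mem_powersetCard] at hp
    exact ⟨hp.1.1, hp.1.2, hp.2.1, hp.2.2⟩
  have hdisj : ∀ p ∈ src, Disjoint p.1 p.2 := by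
    intro p hp
    obtain ⟨h1, _, h2, _⟩ := hmemsrc p hp
    refine Finset.disjoint_left.2 fun a ha hb => ?_
    exact (Finset.mem_compl.1 (h2 hb)) (h1 ha)
  have hsub : (fun p : Finset (Fin n) × Finset (Fin n) => p.1 ∪ p.2) '' ↑src ⊆ tgt := by
    rintro S ⟨p, hp, rfl⟩
    obtain ⟨h1, h2, h3, h4⟩ := hmemsrc p hp
    have hAm : ∀ v ∈ p.1, (v : ℕ) < m := fun v hv => (hXmem v).1 (h1 hv)
    have hBm : ∀ v ∈ p.2, ¬ (v : ℕ) < m := fun v hv =>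
      fun h => (Finset.mem_compl.1 (h3 hv)) ((hXmem v).2 h)
    refine ⟨?_, p.1, Finset.subset_union_left, h2, ?_⟩
    · rw [Finset.card_union_of_disjoint (hdisj p hp), h2, h4]
    · intro u hu w hw
      constructor
      · rintro ⟨hum, hwm⟩
        refine ⟨?_, ?_⟩
        · rcases Finset.mem_union.1 hu with h | h
          · exact h
          · exact absurd hum (hBm u h)
        · intro hwA; exact hwm (hAm w hwA)
      · rintro ⟨huA, hwA⟩
        refine ⟨hAm u huA, ?_⟩
        rcases Finset.mem_union.1 hw with h | h
        · exact absurd h hwA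
        · exact hBm w h
  have hinj : Set.InjOn (fun p : Finset (Fin n) × Finset (Fin n) => p.1 ∪ p.2) ↑src := by
    intro p hp q hq he
    obtain ⟨hp1, _, hp2, _⟩ := hmemsrc p (by simpa using hp)
    obtain ⟨hq1, _, hq2, _⟩ := hmemsrc q (by simpa using hq)
    have key : ∀ r : Finset (Fin n) × Finset (Fin n), r.1 ⊆ X → r.2 ⊆ Xᶜ →
        r.1 = (r.1 ∪ r.2).filter (· ∈ X) ∧ r.2 = (r.1 ∪ r.2).filter (· ∉ X) := by
      intro r hr1 hr2
      constructor
      · ext a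
        simp only [Finset.mem_filter, Finset.mem_union]
        constructor
        · intro ha; exact ⟨Or.inl ha, hr1 ha⟩
        · rintro ⟨ha | ha, hx⟩
          · exact ha
          · exact absurd hx (Finset.mem_compl.1 (hr2 ha))
      · ext a
        simp only [Finset.mem_filter, Finset.mem_union]
        constructor
        · intro ha; exact ⟨Or.inr ha, Finset.mem_compl.1 (hr2 ha)⟩
        · rintro ⟨ha | ha, hx⟩
          · exact absurd (hr1 ha) hx
          · exact ha
    have he' : p.1 ∪ p.2 = q.1 ∪ q.2 := he
    obtain ⟨e1, e2⟩ := key p hp1 hp2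
    obtain ⟨f1, f2⟩ := key q hq1 hq2
    have : p.1 = q.1 := by rw [e1, f1, he']
    have h2 : p.2 = q.2 := by rw [e2, f2, he']
    exact Prod.ext this h2
  have htgtfin : tgt.Finite := Set.toFinite _
  calc m.choose s * (n - m).choose t = src.card := by
        rw [hsrc, Finset.card_product, Finset.card_powersetCard, Finset.card_powersetCard,
          hXcard, hXc]
    _ = ((fun p : Finset (Fin n) × Finset (Fin n) => p.1 ∪ p.2) '' ↑src).ncard := by
        rw [Set.ncard_image_of_injOn hinj, Set.ncard_coe_finset]
    _ ≤ tgt.ncard := Set.ncard_le_ncard hsub htgtfin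
    _ = kstCount s t _ := rfl

theorem kst_inducibility_lower (s t : ℕ) (hs : 2 ≤ s) (hst : s ≤ t)
    (ε : ℝ) (hε : 0 < ε) :
    ∃ N : ℕ, ∀ n : ℕ, N ≤ n → ∃ D : Fin n → Fin n → Prop,
      (((s + t).choose s : ℝ) * ((s : ℝ) / (s + t)) ^ s * ((t : ℝ) / (s + t)) ^ t - ε) *
          (n.choose (s + t) : ℝ) ≤ (kstCount s t D : ℝ) := by
  obtain ⟨N, hN⟩ := main_analysis s t hs hst ε hε
  refine ⟨N, fun n hn => ?_⟩
  set m := s * n / (s + t) with hmdef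
  refine ⟨fun v w : Fin n => (v : ℕ) < m ∧ ¬ ((w : ℕ) < m), ?_⟩
  have hm : m ≤ n := by
    have h1 : s * n ≤ (s + t) * n := Nat.mul_le_mul_right n (Nat.le_add_right s t)
    calc m = s * n / (s + t) := rfl
      _ ≤ (s + t) * n / (s + t) := Nat.div_le_div_right h1
      _ = n := Nat.mul_div_cancel_left n (by omega)
  have hcount := count_lower s t n m hm
  have hcast : ((m.choose s * (n - m).choose t : ℕ) : ℝ)
      ≤ (kstCount s t (fun v w : Fin n => (v : ℕ) < m ∧ ¬ ((w : ℕ) < m)) : ℝ) := by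
    exact_mod_cast hcount
  exact le_trans (hN n hn) hcast
end

section
/- Let m ≥ 1 and let s, t be integers with 2 ≤ s ≤ t. If w_1 ≥ w_2 ≥ … ≥ w_m ≥ 0 are real numbers, then Σ_{1 ≤ i < j ≤ m} w_i^t · w_j^s ≤ w_1^t · ( Σ_{i=2}^{m} w_i )^s. -/
open Finset

lemma sum_pow_le_pow_sum' (F : Finset ℕ) (f : ℕ → ℝ) (hf : ∀ i, 0 ≤ f i)
    (n : ℕ) (hn : n ≠ 0) : (∑ i ∈ F, f i ^ n) ≤ (∑ i ∈ F, f i) ^ n := by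
  induction F using Finset.cons_induction with
  | empty => simp [zero_pow hn]
  | cons a F ha ih =>
      rw [Finset.sum_cons, Finset.sum_cons]
      calc f a ^ n + ∑ i ∈ F, f i ^ n ≤ f a ^ n + (∑ i ∈ F, f i) ^ n := by linarith
        _ ≤ (f a + ∑ i ∈ F, f i) ^ n :=
          pow_add_pow_le (hf a) (Finset.sum_nonneg fun i _ => hf i) hn

/-- For `w_1 ≥ w_2 ≥ … ≥ w_m ≥ 0` and `2 ≤ s ≤ t`,
`Σ_{1 ≤ i < j ≤ m} w_i^t·w_j^s ≤ w_1^t·(Σ_{i=2}^m w_i)^s`. -/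
theorem kst_key_inequality (m s t : ℕ) (hm : 1 ≤ m) (hs : 2 ≤ s) (hst : s ≤ t)
    (w : ℕ → ℝ) (hnonneg : ∀ i, 0 ≤ w i)
    (hmono : ∀ i j : ℕ, 1 ≤ i → i ≤ j → j ≤ m → w j ≤ w i) :
    (∑ i ∈ Finset.Icc 1 m, ∑ j ∈ Finset.Icc 1 m,
        if i < j then w i ^ t * w j ^ s else 0) ≤
      w 1 ^ t * (∑ i ∈ Finset.Icc 2 m, w i) ^ s := by
  set S : ℝ := ∑ i ∈ Finset.Icc 2 m, w i with hS
  have hSnn : 0 ≤ S := Finset.sum_nonneg fun i _ => hnonneg i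
  have hw1 : ∀ i, 1 ≤ i → i ≤ m → w i ≤ w 1 := fun i h1 h2 => hmono 1 i le_rfl h1 h2
  have hw1nn : 0 ≤ w 1 := hnonneg 1
  -- rewrite as iterated sum over j (from 2) then i < j
  have h1 : (∑ i ∈ Finset.Icc 1 m, ∑ j ∈ Finset.Icc 1 m,
        if i < j then w i ^ t * w j ^ s else 0)
      = ∑ j ∈ Finset.Icc 2 m, ∑ i ∈ Finset.Ico 1 j, w i ^ t * w j ^ s := by
    rw [Finset.sum_comm]
    have h2 : (∑ j ∈ Finset.Icc 1 m, ∑ i ∈ Finset.Icc 1 m,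
          if i < j then w i ^ t * w j ^ s else 0)
        = ∑ j ∈ Finset.Icc 1 m, ∑ i ∈ Finset.Ico 1 j, w i ^ t * w j ^ s := by
      refine Finset.sum_congr rfl fun j hj => ?_
      simp only [Finset.mem_Icc] at hj
      rw [← Finset.sum_filter]
      congr 1
      ext i
      simp only [Finset.mem_filter, Finset.mem_Icc, Finset.mem_Ico]
      omega
    rw [h2]
    symm
    refine Finset.sum_subset (Finset.Icc_subset_Icc_left one_le_two) fun j hj hj' => ?_
    simp only [Finset.mem_Icc] at hj hj'
    have : j = 1 := by omega
    subst this
    simp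
  rw [h1]
  -- key per-j bound
  have key : ∀ j ∈ Finset.Icc 2 m, (∑ i ∈ Finset.Ico 1 j, w i ^ t * w j ^ s)
      ≤ w 1 ^ t * (w j ^ (s - 1) * ∑ i ∈ Finset.Icc 2 j, w i) := by
    intro j hj
    simp only [Finset.mem_Icc] at hj
    have hIco : Finset.Ico 1 j = insert 1 (Finset.Ico 2 j) := by
      ext i; simp only [Finset.mem_insert, Finset.mem_Ico]; omega
    have hIcc : Finset.Icc 2 j = insert j (Finset.Ico 2 j) := by
      ext i; simp only [Finset.mem_insert, Finset.mem_Icc, Finset.mem_Ico]; omega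
    have hsj : w j ^ s = w j ^ (s - 1) * w j := by
      rw [← pow_succ]; congr 1; omega
    rw [hIco, hIcc, Finset.sum_insert (by simp), Finset.sum_insert (by simp),
      mul_add, mul_add, Finset.mul_sum, Finset.mul_sum]
    refine add_le_add (le_of_eq (by rw [hsj])) (Finset.sum_le_sum fun i hi => ?_)
    simp only [Finset.mem_Ico] at hi
    have hwi1 : w i ≤ w 1 := hw1 i (by omega) (by omega)
    have hwj1 : w j ≤ w 1 := hw1 j (by omega) hj.2
    have hwinn := hnonneg i
    have hwjnn := hnonneg j
    have ht1 : w i ^ t = w i ^ (t - 1) * w i := by rw [← pow_succ]; congr 1; omega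
    have hw1t : w 1 ^ t = w 1 ^ (t - 1) * w 1 := by rw [← pow_succ]; congr 1; omega
    rw [ht1, hsj, hw1t]
    calc w i ^ (t-1) * w i * (w j ^ (s-1) * w j)
        ≤ w 1 ^ (t-1) * w i * (w j ^ (s-1) * w 1) :=
          mul_le_mul (mul_le_mul_of_nonneg_right (pow_le_pow_left₀ hwinn hwi1 _) hwinn)
            (mul_le_mul_of_nonneg_left hwj1 (pow_nonneg hwjnn _))
            (mul_nonneg (pow_nonneg hwjnn _) hwjnn)
            (mul_nonneg (pow_nonneg hw1nn _) hwinn)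
      _ = w 1 ^ (t-1) * w 1 * (w j ^ (s-1) * w i) := by ring
  have hss : s - 1 ≠ 0 := by omega
  calc (∑ j ∈ Finset.Icc 2 m, ∑ i ∈ Finset.Ico 1 j, w i ^ t * w j ^ s)
      ≤ ∑ j ∈ Finset.Icc 2 m, w 1 ^ t * (w j ^ (s - 1) * ∑ i ∈ Finset.Icc 2 j, w i) :=
        Finset.sum_le_sum key
    _ ≤ ∑ j ∈ Finset.Icc 2 m, w 1 ^ t * (w j ^ (s - 1) * S) := by
        refine Finset.sum_le_sum fun j hj => ?_
        simp only [Finset.mem_Icc] at hj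
        refine mul_le_mul_of_nonneg_left (mul_le_mul_of_nonneg_left ?_
          (pow_nonneg (hnonneg j) _)) (pow_nonneg hw1nn _)
        exact Finset.sum_le_sum_of_subset_of_nonneg
          (Finset.Icc_subset_Icc_right hj.2) (fun i _ _ => hnonneg i)
    _ = w 1 ^ t * S * ∑ j ∈ Finset.Icc 2 m, w j ^ (s - 1) := by
        rw [Finset.mul_sum]; refine Finset.sum_congr rfl fun j _ => by ring
    _ ≤ w 1 ^ t * S * S ^ (s - 1) := by
        refine mul_le_mul_of_nonneg_left ?_ (by positivity)
        exact sum_pow_le_pow_sum' _ _ hnonneg _ hss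
    _ = w 1 ^ t * S ^ s := by
        rw [mul_assoc]
        congr 1
        rw [← pow_succ']
        congr 1
        omega
end
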